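/- arXiv:2311.08855 — 2 statements merged into one kernel-verified Lean document; each statement's English description precedes it below -/
import Mathlib

section
/- Let α be a rational number with 0 < α < 1 and let p be the numerator of α (in lowest terms). Then α^p ≤ 1/2. -/
theorem pow_num_le_half (α : ℚ) (h0 : 0 < α) (h1 : α < 1) :
    α ^ α.num ≤ 1 / 2 := by
  have hnum : 0 < α.num := Rat.num_pos.mpr h0
  set p : ℕ := α.num.toNat with hp
  have hp0 : 0 < p := by omega
  have hzp : α ^ α.num = α ^ p := by
    rw [← Int.toNat_of_nonneg hnum.le, zpow_natCast]
  rw [hzp]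
  have hppos : (0:ℚ) < p := by exact_mod_cast hp0
  -- α ≤ p/(p+1)
  have hnd : α.num < α.den := by
    have h1' := h1
    rw [← Rat.num_div_den α, div_lt_one (by exact_mod_cast α.pos)] at h1'
    exact_mod_cast h1'
  have hden : (p:ℤ) + 1 ≤ α.den := by omega
  have hα : α ≤ (p : ℚ) / (p + 1) := by
    rw [le_div_iff₀ (by positivity)]
    nth_rewrite 1 [← Rat.num_div_den α]
    rw [div_mul_eq_mul_div, div_le_iff₀ (by exact_mod_cast α.pos)]
    have h1' : (α.num : ℚ) = (p : ℚ) := by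
      rw [← Int.toNat_of_nonneg hnum.le]; push_cast; ring
    rw [h1']
    have h2 : ((p:ℚ) + 1) ≤ (α.den : ℚ) := by exact_mod_cast hden
    nlinarith [h2, hppos]
  calc α ^ p ≤ ((p : ℚ) / (p + 1)) ^ p := by
        apply pow_le_pow_left₀ h0.le hα
    _ ≤ 1 / 2 := by
        rw [div_pow, div_le_div_iff₀ (by positivity) (by norm_num), one_mul]
        have hb : (1 : ℚ) + p * (1 / p) ≤ (1 + 1/p) ^ p := by
          apply one_add_mul_le_pow
          have : (0:ℚ) ≤ 1/p := by positivity
          linarith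
        have h2 : (2:ℚ) ≤ (1 + 1/p)^p := by
          rw [mul_one_div, div_self hppos.ne'] at hb; linarith
        have key : ((p:ℚ)+1)^p = ((1 + 1/p)^p) * (p:ℚ)^p := by
          rw [← mul_pow]; congr 1; field_simp
        rw [key]
        nlinarith [pow_pos hppos p]
end

section
/- Let α, c, r be rational numbers with 0 < α < 1, and let S, x : ℕ → ℚ be sequences such that x_{k+1} = (1−α)·x_k + α·S_{k+1} for all k, and c − r ≤ S_k ≤ c + r for all k with 1 ≤ k ≤ n. Then (1−α)^n · x_0 + (1 − (1−α)^n)·(c − r) ≤ x_n ≤ (1−α)^n · x_0 + (1 − (1−α)^n)·(c + r). -/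
theorem srtt_steady_state_bounds (α c r : ℚ) (h0 : 0 < α) (h1 : α < 1)
    (S x : ℕ → ℚ) (n : ℕ)
    (hrec : ∀ k : ℕ, x (k + 1) = (1 - α) * x k + α * S (k + 1))
    (hS : ∀ k : ℕ, 1 ≤ k → k ≤ n → c - r ≤ S k ∧ S k ≤ c + r) :
    (1 - α) ^ n * x 0 + (1 - (1 - α) ^ n) * (c - r) ≤ x n ∧
      x n ≤ (1 - α) ^ n * x 0 + (1 - (1 - α) ^ n) * (c + r) := by
  induction n with
  | zero => simp
  | succ n ih =>
    have ih' := ih (fun k hk hkn => hS k hk (hkn.trans (Nat.le_succ n)))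
    obtain ⟨hlo, hhi⟩ := hS (n + 1) (Nat.succ_le_succ (Nat.zero_le n)) le_rfl
    have hβ : 0 < 1 - α := by linarith
    have hrec' := hrec n
    rw [pow_succ]
    constructor <;> nlinarith [ih'.1, ih'.2, mul_le_mul_of_nonneg_left ih'.1 hβ.le,
      mul_le_mul_of_nonneg_left ih'.2 hβ.le, mul_le_mul_of_nonneg_left hlo h0.le,
      mul_le_mul_of_nonneg_left hhi h0.le]
end
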